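/- arXiv:1504.06647 — 3 statements merged into one kernel-verified Lean document; each statement's English description precedes it below -/
import Mathlib

section
/- Let α be a word of length ℓ with per(α) ≤ ℓ/3, and suppose α has non-shiftable occurrences at positions i' and i in a text T with i' < i. Then i - i' > ℓ/2. -/
variable {α : Type*}

/-- The subword of `w` of length `len` starting at 0-indexed position `i`. -/
def subword (w : List α) (i len : ℕ) : List α := (w.drop i).take len

/-- `u` occurs in `w` at 0-indexed position `i`. -/
def OccursAt (u w : List α) (i : ℕ) : Prop :=
  i + u.length ≤ w.length ∧ subword w i u.length = u

/-- `p` is a period of `w`: `w[i] = w[i+p]` whenever both positions are in range. -/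
def HasPeriod (w : List α) (p : ℕ) : Prop :=
  0 < p ∧ ∀ i : ℕ, i + p < w.length → w[i]? = w[i + p]?

/-- `per w`: the length of the shortest period of `w`. -/
noncomputable def minPeriod (w : List α) : ℕ := sInf {p | HasPeriod w p}

/-- An occurrence of `x` at (0-indexed) position `i` in `w` is shiftable if
`x` also occurs at position `i - per x`. -/
def Shiftable (x w : List α) (i : ℕ) : Prop :=
  minPeriod x ≤ i ∧ OccursAt x w (i - minPeriod x)

/- ### auxiliary lemmas -/

lemma occursAt_get? {u w : List α} {i : ℕ} (h : OccursAt u w i) {j : ℕ}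
    (hj : j < u.length) : w[i + j]? = u[j]? := by
  obtain ⟨hle, heq⟩ := h
  conv_rhs => rw [← heq]
  simp only [subword, List.getElem?_take, hj, if_true,
    List.getElem?_drop]

lemma occursAt_of_get? {u w : List α} {i : ℕ} (hle : i + u.length ≤ w.length)
    (h : ∀ j < u.length, w[i + j]? = u[j]?) : OccursAt u w i := by
  refine ⟨hle, List.ext_getElem? fun j => ?_⟩
  by_cases hj : j < u.length
  · rw [← h j hj]
    simp only [subword, List.getElem?_take, hj, if_true,
      List.getElem?_drop]
  · push_neg at hj
    have h1 : (subword w i u.length).length ≤ j := by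
      simp only [subword, List.length_take, List.length_drop]
      omega
    simp [List.getElem?_eq_none, hj, h1]

/-- multiples of a period are periods (pointwise form) -/
lemma hasPeriod_mul {w : List α} {p : ℕ} (h : HasPeriod w p) (k j : ℕ)
    (hj : j + k * p < w.length) : w[j]? = w[j + k * p]? := by
  induction k with
  | zero => simp
  | succ k ih =>
    have hp := h.1
    have h1 : j + k * p < w.length := by nlinarith [Nat.succ_mul k p]
    have h2 : j + k * p + p < w.length := by
      have : j + (k+1) * p = j + k * p + p := by ring
      omega
    rw [ih h1, h.2 _ h2]
    congr 1
    ring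

/-- subtraction step for Fine–Wilf -/
lemma hasPeriod_sub {w : List α} {p q : ℕ} (hp : HasPeriod w p) (hq : HasPeriod w q)
    (hpq : p < q) (hn : p + q ≤ w.length) : HasPeriod w (q - p) := by
  refine ⟨by omega, fun j hj => ?_⟩
  by_cases hjp : p ≤ j
  · have h1 : (j - p) + q < w.length := by omega
    have h2 : (j - p) + p < w.length := by omega
    have e1 := hq.2 (j - p) h1
    have e2 := hp.2 (j - p) h2
    have e3 : j - p + p = j := by omega
    have e4 : j - p + q = j + (q - p) := by omega
    rw [e3] at e2
    rw [e4] at e1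
    rw [← e2, e1]
  · have h1 : j + q < w.length := by omega
    have e1 := hq.2 j h1
    have e2 := hp.2 (j + (q - p)) (by omega)
    have e3 : j + (q - p) + p = j + q := by omega
    rw [e3] at e2
    rw [e1, ← e2]

/-- Weak Fine–Wilf lemma. -/
lemma fine_wilf {w : List α} : ∀ p q : ℕ, HasPeriod w p → HasPeriod w q →
    p + q ≤ w.length → HasPeriod w (Nat.gcd p q) := by
  have H : ∀ n p q : ℕ, p + q ≤ n → HasPeriod w p → HasPeriod w q →
      p + q ≤ w.length → HasPeriod w (Nat.gcd p q) := by
    intro n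
    induction n with
    | zero => intro p q h hp _ _; exact absurd hp.1 (by omega)
    | succ n ih =>
      intro p q hn hp hq hw
      have hp0 := hp.1
      have hq0 := hq.1
      rcases lt_trichotomy p q with h | h | h
      · have h' : HasPeriod w (q - p) := hasPeriod_sub hp hq h hw
        have := ih p (q - p) (by omega) hp h' (by omega)
        rwa [Nat.gcd_sub_self_right (le_of_lt h)] at this
      · subst h
        rwa [Nat.gcd_self]
      · have h' : HasPeriod w (p - q) := hasPeriod_sub hq hp h (by omega)
        have := ih (p - q) q (by omega) h' hq (by omega)
        rwa [Nat.gcd_sub_self_left (le_of_lt h)] at this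
  intro p q hp hq hw
  exact H (p + q) p q le_rfl hp hq hw

/-- If `A` has length `ℓ` with `per A ≤ ℓ/3` and has non-shiftable occurrences
at positions `i' < i` in `T`, then `i - i' > ℓ/2`. -/
theorem statement_5 (T A : List α) (ℓ i i' : ℕ)
    (hlen : A.length = ℓ) (hper : 3 * minPeriod A ≤ ℓ)
    (h1 : OccursAt A T i') (hs1 : ¬ Shiftable A T i')
    (h2 : OccursAt A T i) (hs2 : ¬ Shiftable A T i)
    (hlt : i' < i) :
    ℓ < 2 * (i - i') := by
  by_contra hcon
  push_neg at hcon
  set d := i - i' with hd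
  have hd0 : 0 < d := by omega
  have hℓ0 : 0 < ℓ := by omega
  -- minPeriod A is a genuine period
  have hne : {p | HasPeriod A p}.Nonempty := by
    refine ⟨ℓ, hℓ0, fun j hj => ?_⟩
    omega
  have hpmem : HasPeriod A (minPeriod A) := Nat.sInf_mem hne
  set p := minPeriod A with hpdef
  have hp0 : 0 < p := hpmem.1
  -- A has period d
  have hdper : HasPeriod A d := by
    refine ⟨hd0, fun j hj => ?_⟩
    have e1 := occursAt_get? h1 (j := j) (by omega)
    have e2 := occursAt_get? h1 (j := j + d) (by omega)
    have e3 := occursAt_get? h2 (j := j) (by omega)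
    have e4 : i' + (j + d) = i + j := by omega
    rw [← e3, ← e4, e2]
  -- p + d ≤ ℓ, so Fine–Wilf applies
  have hsum : p + d ≤ A.length := by omega
  have hgcd : HasPeriod A (Nat.gcd p d) := fine_wilf p d hpmem hdper hsum
  have hle1 : p ≤ Nat.gcd p d := Nat.sInf_le hgcd
  have hle2 : Nat.gcd p d ≤ p := Nat.gcd_le_left d hp0
  have hdvd : p ∣ d := by
    have : Nat.gcd p d = p := le_antisymm hle2 hle1
    exact this ▸ Nat.gcd_dvd_right p d
  have hpd : p ≤ d := Nat.le_of_dvd hd0 hdvd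
  -- A occurs at i - p, contradicting non-shiftability at i
  apply hs2
  refine ⟨by omega, ?_⟩
  refine occursAt_of_get? (by have := h2.1; omega) fun j hj => ?_
  rw [hlen] at hj
  by_cases hcase : j + (d - p) < ℓ
  · -- use the occurrence at i'
    have e1 : i - p + j = i' + ((d - p) + j) := by omega
    have e2 := occursAt_get? h1 (j := (d - p) + j) (by omega)
    obtain ⟨k, hk⟩ := hdvd
    have hkp : d - p = (k - 1) * p := by
      cases k with
      | zero => omega
      | succ k =>
        simp only [Nat.succ_sub_one]
        rw [hk, Nat.mul_succ, Nat.add_sub_cancel, Nat.mul_comm]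
    have e3 := hasPeriod_mul hpmem (k - 1) j (by omega)
    rw [← hkp] at e3
    rw [e1, e2, Nat.add_comm (d - p) j, ← e3]
  · -- use the occurrence at i
    push_neg at hcase
    have hjp : p ≤ j := by omega
    have e1 : i - p + j = i + (j - p) := by omega
    have e2 := occursAt_get? h2 (j := j - p) (by omega)
    have e3 := hpmem.2 (j - p) (by omega)
    have e4 : j - p + p = j := by omega
    rw [e4] at e3
    rw [e1, e2, ← e3]
end

section
/- Suppose every block of a partition of a word w into consecutive blocks can be factorized into at most k phrases, where a phrase is a previous fragment of w or a fresh single letter. Then the greedy left-to-right factorization of each block (taking the longest previous fragment within the block at each step) produces at most k phrases per block. -/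
variable {α : Type*}

/-- The fragment of `w` of length `len` starting at 0-indexed position `i`
is a previous fragment: the corresponding word occurs earlier in `w`. -/
def PrevFrag (w : List α) (i len : ℕ) : Prop :=
  0 < len ∧ i + len ≤ w.length ∧ ∃ i' < i, OccursAt (subword w i len) w i'

/-- The letter at position `i` of `w` does not occur earlier in `w`. -/
def FreshLetter (w : List α) (i : ℕ) : Prop :=
  i < w.length ∧ ∀ i' < i, w[i']? ≠ w[i]?

/-- A phrase is a previous fragment or a single letter not occurring before. -/
def IsPhrase (w : List α) (i len : ℕ) : Prop :=
  PrevFrag w i len ∨ (len = 1 ∧ FreshLetter w i)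

/-- A factorization of the block `w[lo..hi)` into `a` consecutive phrases of `w`,
with boundaries `b 0 = lo < b 1 < ... < b a = hi`. -/
def IsBlockFactorization (w : List α) (lo hi a : ℕ) (b : ℕ → ℕ) : Prop :=
  b 0 = lo ∧ b a = hi ∧ (∀ k < a, b k < b (k + 1)) ∧
    ∀ k < a, IsPhrase w (b k) (b (k + 1) - b k)

/-- The greedy factorization of the block: each phrase is the longest phrase
starting at its position and contained in the block. -/
def IsGreedyBlockFactorization (w : List α) (lo hi a : ℕ) (b : ℕ → ℕ) : Prop :=
  IsBlockFactorization w lo hi a b ∧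
    ∀ k < a, ∀ len, b (k + 1) - b k < len → b k + len ≤ hi →
      ¬ IsPhrase w (b k) len

lemma subword_len (w : List α) (i len : ℕ) (h : i + len ≤ w.length) :
    (subword w i len).length = len := by
  simp [subword]; omega

lemma subword_drop (w : List α) (i d len : ℕ) :
    (subword w i len).drop d = subword w (i+d) (len-d) := by
  simp [subword, List.drop_take, List.drop_drop]

lemma phrase_suffix {w : List α} {i len j : ℕ} (h : IsPhrase w i len)
    (hij : i ≤ j) (hj : j < i + len) : IsPhrase w j (i + len - j) := by
  rcases h with ⟨hpos, hle, i', hi', hocc⟩ | ⟨h1, hf⟩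
  · left
    refine ⟨by omega, by omega, i' + (j - i), by omega, ?_, ?_⟩
    · rw [subword_len w j (i + len - j) (by omega)]
      have := hocc.1
      rw [subword_len w i len hle] at this
      omega
    · rw [subword_len w j (i + len - j) (by omega)]
      have hlen : (subword w i len).length = len := subword_len w i len hle
      have h2 := hocc.2
      rw [hlen] at h2
      have : (subword w i' len).drop (j - i) = (subword w i len).drop (j - i) := by
        rw [h2]
      rw [subword_drop, subword_drop] at this
      have e1 : i' + (j - i) + (i + len - j) ≤ w.length := by
        have := hocc.1; rw [hlen] at this; omega
      convert this using 2 <;> omega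
  · right
    have hji : j = i := by omega
    subst hji
    exact ⟨by omega, hf⟩

lemma mono_of_strict {f : ℕ → ℕ} {n : ℕ} (h : ∀ k < n, f k < f (k+1)) :
    ∀ i j, i ≤ j → j ≤ n → f i ≤ f j := by
  intro i j hij hjn
  induction j with
  | zero =>
    have : i = 0 := by omega
    simp [this]
  | succ m ih =>
    rcases Nat.lt_or_ge i (m+1) with h1 | h1
    · exact le_trans (ih (by omega) (by omega)) (le_of_lt (h m (by omega)))
    · have : i = m + 1 := by omega
      simp [this]

/-- Optimality of greedy block factorization: if a block can be factorized into at
most `k` phrases, then the greedy factorization of the block has at most `k` phrases. -/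
theorem statement_11 (w : List α) (lo hi k a a' : ℕ) (b g : ℕ → ℕ)
    (hgreedy : IsGreedyBlockFactorization w lo hi a b)
    (hfac : IsBlockFactorization w lo hi a' g)
    (hk : a' ≤ k) :
    a ≤ k := by
  obtain ⟨⟨hb0, hba, hbmono, hbph⟩, hgr⟩ := hgreedy
  obtain ⟨hg0, hga, hgmono, hgph⟩ := hfac
  suffices h : a ≤ a' by omega
  by_contra hcon
  push_neg at hcon
  -- main claim: g m ≤ b m for m ≤ a'
  have claim : ∀ m, m ≤ a' → g m ≤ b m := by
    intro m
    induction m with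
    | zero => intro _; rw [hb0, hg0]
    | succ n ih =>
      intro hna'
      have hgk := ih (by omega)
      have hna : n < a := by omega
      have hstrictb := hbmono n hna
      rcases Nat.lt_or_ge (b n) (g (n+1)) with hlt | hge
      · -- suffix of the phrase [g n, g(n+1)) starting at b n is a phrase
        have hgs := hgmono n (by omega)
        have hph := hgph n (by omega)
        have hsuf : IsPhrase w (b n) (g n + (g (n+1) - g n) - b n) :=
          phrase_suffix hph hgk (by omega)
        have hsuf' : IsPhrase w (b n) (g (n+1) - b n) := by
          have : g n + (g (n+1) - g n) - b n = g (n+1) - b n := by omega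
          rwa [this] at hsuf
        by_contra hc
        push_neg at hc
        have hhi : g (n+1) ≤ hi := by
          have := mono_of_strict hgmono (n+1) a' hna' le_rfl
          omega
        exact hgr n hna (g (n+1) - b n) (by omega) (by omega) hsuf'
      · omega
  have h1 : g a' ≤ b a' := claim a' le_rfl
  have h2 : b (a'+1) ≤ b a := mono_of_strict hbmono (a'+1) a hcon le_rfl
  have h3 : b a' < b (a'+1) := hbmono a' (by omega)
  omega
end

section
/- Any fragment w[i..j] of a word w that is not a previous fragment must contain the ending position of some phrase of the LZ77 factorization of w, i.e., there exists an LZ77 phrase f_k = w[a..b] with i ≤ b ≤ j. -/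
variable {α : Type*}

/-- `b 0 = 0 < b 1 < ... < b a = |w|` are the boundaries of a factorization of `w`
into `a` pieces; piece `k` starts at `b k` and has length `b (k+1) - b k`. -/
def IsFactorization (w : List α) (a : ℕ) (b : ℕ → ℕ) : Prop :=
  b 0 = 0 ∧ b a = w.length ∧ ∀ k < a, b k < b (k + 1)

/-- A factorization of `w` into `a` phrases. -/
def IsPhraseFactorization (w : List α) (a : ℕ) (b : ℕ → ℕ) : Prop :=
  IsFactorization w a b ∧ ∀ k < a, IsPhrase w (b k) (b (k + 1) - b k)

/-- The LZ77 (greedy) factorization of `w` into `z` phrases: each phrase is the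
longest possible phrase starting at its position. -/
def IsLZ77 (w : List α) (z : ℕ) (b : ℕ → ℕ) : Prop :=
  IsPhraseFactorization w z b ∧
    ∀ k < z, ∀ len, b (k + 1) - b k < len → b k + len ≤ w.length →
      ¬ IsPhrase w (b k) len

lemma subword_length (w : List α) (s L : ℕ) (h : s + L ≤ w.length) :
    (subword w s L).length = L := by
  simp [subword]; omega

lemma subword_sub (w : List α) (s d m L : ℕ) (h : d + m ≤ L) :
    subword w (s + d) m = ((subword w s L).drop d).take m := by
  unfold subword
  rw [List.drop_take, List.drop_drop, List.take_take]
  congr 1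
  omega

lemma find_interval (b : ℕ → ℕ) (z i : ℕ) (h0 : b 0 ≤ i) (hz : i < b z) :
    ∃ k < z, b k ≤ i ∧ i < b (k + 1) := by
  induction z with
  | zero => omega
  | succ m ih =>
    by_cases hm : b m ≤ i
    · exact ⟨m, Nat.lt_succ_self m, hm, hz⟩
    · obtain ⟨k, hk, h1, h2⟩ := ih (by omega)
      exact ⟨k, hk.trans (Nat.lt_succ_self m), h1, h2⟩

/-- Any fragment `w[i..j]` that is not a previous fragment must contain the ending
position of some phrase of the LZ77 factorization of `w`. -/
theorem statement_15 (w : List α) (z i j : ℕ) (f : ℕ → ℕ)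
    (hlz : IsLZ77 w z f)
    (hij : i ≤ j) (hj : j < w.length)
    (hnp : ¬ PrevFrag w i (j + 1 - i)) :
    ∃ k < z, i ≤ f (k + 1) - 1 ∧ f (k + 1) - 1 ≤ j := by
  by_contra hcon
  push_neg at hcon
  obtain ⟨⟨⟨hf0, hfz, hmono⟩, hph⟩, -⟩ := hlz
  obtain ⟨k, hk, hki, hik⟩ := find_interval f z i (by omega) (by omega)
  have hend : j < f (k + 1) - 1 := hcon k hk (by omega)
  have hLpos := hmono k hk
  rcases hph k hk with hprev | ⟨h1, -⟩
  · obtain ⟨-, hle, i', hi', hocc⟩ := hprev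
    set L := f (k + 1) - f k with hL
    have hlen : (subword w (f k) L).length = L := subword_length w _ _ (by omega)
    obtain ⟨hocc1, hocc2⟩ := hocc
    rw [hlen] at hocc1 hocc2
    apply hnp
    refine ⟨by omega, by omega, i' + (i - f k), by omega, ?_, ?_⟩
    · rw [subword_length w i (j + 1 - i) (by omega)]; omega
    · rw [subword_length w i (j + 1 - i) (by omega)]
      have e1 : subword w (i' + (i - f k)) (j + 1 - i) =
          ((subword w i' L).drop (i - f k)).take (j + 1 - i) :=
        subword_sub w i' (i - f k) (j + 1 - i) L (by omega)
      have e2 : subword w i (j + 1 - i) =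
          ((subword w (f k) L).drop (i - f k)).take (j + 1 - i) := by
        have := subword_sub w (f k) (i - f k) (j + 1 - i) L (by omega)
        rw [← this]; congr 1; omega
      rw [e1, hocc2, ← e2]
  · omega
end
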